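/- Fix n, p : ℕ, k : Fin n, m : Fin p, parameters a : Fin n → ℝ, b : Fin p → ℝ, W : Fin n → Fin p → ℝ. Let S := Fin n ⊕ Fin p, let matrices be indexed by configurations f : S → Fin 2 with complex entries, and define ζ s f := (1 : ℝ) if f s = 0 and (−1) otherwise; σz(s) := Matrix.diagonal (fun f => (ζ s f : ℂ)); E f := (∑ i, a i · ζ (Sum.inl i) f) + (∑ j, b j · ζ (Sum.inr j) f) + ∑ i, ∑ j, W i j · ζ (Sum.inl i) f · ζ (Sum.inr j) f; H := Matrix.diagonal (fun f => (E f : ℂ)); ρ := (trace (Matrix.exp (−H)))⁻¹ • Matrix.exp (−H). Let P, Q be matrices with P·P = 1, Q·Q = 1, P·Q = Q·P, P·σz(Sum.inl k) = −(σz(Sum.inl k)·P), Q·σz(Sum.inr m) = −(σz(Sum.inr m)·Q), P·σz(s) = σz(s)·P for all s ≠ Sum.inl k, and Q·σz(s) = σz(s)·Q for all s ≠ Sum.inr m. Then for every t ∈ ℝ, with Q(t) := Matrix.exp((Complex.I·t)•H) · Q · Matrix.exp((−(Complex.I·t))•H), one has trace(ρ · P · Q(t) · P · Q(t)) = (Real.cos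 (4·W k m·t) : ℂ) − Complex.I · trace(ρ · σz(Sum.inl k) · σz(Sum.inr m)) · (Real.sin (4·W k m·t) : ℂ). -/

import Mathlib

open Matrix NormedSpace

noncomputable section

variable {n p : ℕ}

/-- Spin value (±1) of site `s` in configuration `f`. -/
def zeta (s : Fin n ⊕ Fin p) (f : (Fin n ⊕ Fin p) → Fin 2) : ℝ :=
  if f s = 0 then 1 else -1

/-- The Pauli-z operator at site `s`, diagonal in the configuration basis. -/
def sigmaZ (s : Fin n ⊕ Fin p) :
    Matrix ((Fin n ⊕ Fin p) → Fin 2) ((Fin n ⊕ Fin p) → Fin 2) ℂ :=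
  Matrix.diagonal fun f => (zeta s f : ℂ)

/-- The classical Ising energy of the RBM (Eq. 2 of the paper). -/
def energy (a : Fin n → ℝ) (b : Fin p → ℝ) (W : Fin n → Fin p → ℝ)
    (f : (Fin n ⊕ Fin p) → Fin 2) : ℝ :=
  (∑ i, a i * zeta (Sum.inl i) f) + (∑ j, b j * zeta (Sum.inr j) f) +
    ∑ i, ∑ j, W i j * zeta (Sum.inl i) f * zeta (Sum.inr j) f

/-- The RBM Hamiltonian, diagonal in the configuration basis. -/
def Hrbm (a : Fin n → ℝ) (b : Fin p → ℝ) (W : Fin n → Fin p → ℝ) :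
    Matrix ((Fin n ⊕ Fin p) → Fin 2) ((Fin n ⊕ Fin p) → Fin 2) ℂ :=
  Matrix.diagonal fun f => (energy a b W f : ℂ)

/-- The thermal state `ρ = e^{-H} / tr(e^{-H})` (Eq. 3 of the paper). -/
def rhoTh (a : Fin n → ℝ) (b : Fin p → ℝ) (W : Fin n → Fin p → ℝ) :
    Matrix ((Fin n ⊕ Fin p) → Fin 2) ((Fin n ⊕ Fin p) → Fin 2) ℂ :=
  (Matrix.trace (NormedSpace.exp (-Hrbm a b W)))⁻¹ • NormedSpace.exp (-Hrbm a b W)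

/-! ### Auxiliary machinery -/

/-- flip one spin -/
def flipAt (t : Fin n ⊕ Fin p) (f : (Fin n ⊕ Fin p) → Fin 2) :
    (Fin n ⊕ Fin p) → Fin 2 :=
  fun s => if s = t then (if f s = 0 then 1 else 0) else f s

lemma flipAt_flipAt (t : Fin n ⊕ Fin p) (f) : flipAt t (flipAt t f) = f := by
  funext s
  simp only [flipAt]
  split
  · split <;> split <;> simp_all <;> omega
  · rfl

lemma flipAt_comm (t t' : Fin n ⊕ Fin p) (f) :
    flipAt t (flipAt t' f) = flipAt t' (flipAt t f) := by
  funext s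
  simp only [flipAt]
  by_cases h : s = t <;> by_cases h' : s = t' <;> simp_all

lemma zeta_flipAt (s t : Fin n ⊕ Fin p) (f) :
    zeta s (flipAt t f) = if s = t then -zeta s f else zeta s f := by
  simp only [zeta, flipAt]
  by_cases h : s = t
  · subst h
    have h2 : f s = 0 ∨ f s = 1 := by omega
    rcases h2 with h2 | h2 <;> simp [h2]
  · simp [h]

lemma zeta_cases (s : Fin n ⊕ Fin p) (f) : zeta s f = 1 ∨ zeta s f = -1 := by
  unfold zeta; split
  · exact Or.inl rfl
  · exact Or.inr rfl

lemma support_flip {A : Matrix ((Fin n ⊕ Fin p) → Fin 2) ((Fin n ⊕ Fin p) → Fin 2) ℂ}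
    {t0 : Fin n ⊕ Fin p}
    (hanti : A * sigmaZ t0 = -(sigmaZ t0 * A))
    (hcomm : ∀ s, s ≠ t0 → A * sigmaZ s = sigmaZ s * A)
    {f g : (Fin n ⊕ Fin p) → Fin 2} (hA : A f g ≠ 0) : g = flipAt t0 f := by
  funext s
  by_cases hs : s = t0
  · subst hs
    have h : (A * sigmaZ s) f g = (-(sigmaZ s * A)) f g := by rw [hanti]
    simp only [sigmaZ, mul_diagonal, diagonal_mul, neg_apply, Matrix.neg_apply] at h
    have h2 : ((zeta s g : ℝ) : ℂ) = ((-zeta s f : ℝ) : ℂ) := by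
      push_cast
      apply mul_left_cancel₀ hA
      rw [h]; ring
    have h3 : zeta s g = -zeta s f := Complex.ofReal_inj.mp h2
    have hf : f s = 0 ∨ f s = 1 := by omega
    have hg : g s = 0 ∨ g s = 1 := by omega
    simp only [flipAt, if_pos rfl]
    rcases hf with hf | hf <;> rcases hg with hg | hg <;>
      simp [zeta, hf, hg] at h3 ⊢ <;> norm_num at h3
  · have h : (A * sigmaZ s) f g = (sigmaZ s * A) f g := by rw [hcomm s hs]
    simp only [sigmaZ, mul_diagonal, diagonal_mul] at h
    have h2 : ((zeta s g : ℝ) : ℂ) = ((zeta s f : ℝ) : ℂ) := by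
      apply mul_left_cancel₀ hA
      rw [h]; ring
    have h3 : zeta s g = zeta s f := Complex.ofReal_inj.mp h2
    have hf : f s = 0 ∨ f s = 1 := by omega
    have hg : g s = 0 ∨ g s = 1 := by omega
    simp only [flipAt, if_neg hs]
    rcases hf with hf | hf <;> rcases hg with hg | hg <;>
      simp [zeta, hf, hg] at h3 ⊢ <;> norm_num at h3

lemma move_diag {A : Matrix ((Fin n ⊕ Fin p) → Fin 2) ((Fin n ⊕ Fin p) → Fin 2) ℂ}
    {t0 : Fin n ⊕ Fin p}
    (hanti : A * sigmaZ t0 = -(sigmaZ t0 * A))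
    (hcomm : ∀ s, s ≠ t0 → A * sigmaZ s = sigmaZ s * A)
    (d : ((Fin n ⊕ Fin p) → Fin 2) → ℂ) :
    A * Matrix.diagonal d = Matrix.diagonal (fun f => d (flipAt t0 f)) * A := by
  ext f g
  simp only [mul_diagonal, diagonal_mul]
  rcases eq_or_ne (A f g) 0 with h | h
  · simp [h]
  · rw [support_flip hanti hcomm h, mul_comm]

lemma sum_mul_if {N : ℕ} (c d : Fin N → ℝ) (k : Fin N) :
    ∑ i, c i * (if i = k then -d i else d i) = (∑ i, c i * d i) - 2 * (c k * d k) := by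
  have h : ∀ i, c i * (if i = k then -d i else d i)
      = c i * d i - (if i = k then 2 * (c i * d i) else 0) := by
    intro i; split <;> ring
  simp_rw [h, Finset.sum_sub_distrib, Finset.sum_ite_eq' Finset.univ k]
  simp

lemma energy_flip_inr (a : Fin n → ℝ) (b : Fin p → ℝ) (W : Fin n → Fin p → ℝ)
    (m : Fin p) (f : (Fin n ⊕ Fin p) → Fin 2) :
    energy a b W (flipAt (Sum.inr m) f)
      = energy a b W f
        - 2 * ((b m + ∑ i, W i m * zeta (Sum.inl i) f) * zeta (Sum.inr m) f) := by
  unfold energy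
  simp only [zeta_flipAt, reduceCtorEq, if_false, Sum.inr.injEq]
  rw [sum_mul_if b (fun j => zeta (Sum.inr j) f) m]
  have h : ∀ i : Fin n, ∑ j, W i j * zeta (Sum.inl i) f *
      (if j = m then -zeta (Sum.inr j) f else zeta (Sum.inr j) f)
      = (∑ j, W i j * zeta (Sum.inl i) f * zeta (Sum.inr j) f)
        - 2 * (W i m * zeta (Sum.inl i) f * zeta (Sum.inr m) f) := by
    intro i
    exact sum_mul_if (fun j => W i j * zeta (Sum.inl i) f)
      (fun j => zeta (Sum.inr j) f) m
  rw [Finset.sum_congr rfl (fun i _ => h i), Finset.sum_sub_distrib]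
  have e2 : ∑ x : Fin n, 2 * (W x m * zeta (Sum.inl x) f * zeta (Sum.inr m) f)
      = 2 * ((∑ i, W i m * zeta (Sum.inl i) f) * zeta (Sum.inr m) f) := by
    rw [Finset.sum_mul, Finset.mul_sum]
    try exact Finset.sum_congr rfl (fun i _ => by ring)
  rw [e2]
  ring

lemma inner_flip_inl (W : Fin n → Fin p → ℝ) (k : Fin n) (m : Fin p)
    (f : (Fin n ⊕ Fin p) → Fin 2) :
    (∑ i, W i m * zeta (Sum.inl i) (flipAt (Sum.inl k) f))
      = (∑ i, W i m * zeta (Sum.inl i) f) - 2 * (W k m * zeta (Sum.inl k) f) := by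
  simp only [zeta_flipAt, Sum.inl.injEq]
  exact sum_mul_if (fun i => W i m) (fun i => zeta (Sum.inl i) f) k

lemma energy_key (a : Fin n → ℝ) (b : Fin p → ℝ) (W : Fin n → Fin p → ℝ)
    (k : Fin n) (m : Fin p) (f : (Fin n ⊕ Fin p) → Fin 2) :
    energy a b W (flipAt (Sum.inl k) f)
      - energy a b W (flipAt (Sum.inr m) (flipAt (Sum.inl k) f))
      + (energy a b W (flipAt (Sum.inr m) f) - energy a b W f)
      = -4 * W k m * (zeta (Sum.inl k) f * zeta (Sum.inr m) f) := by
  rw [energy_flip_inr a b W m (flipAt (Sum.inl k) f), energy_flip_inr a b W m f,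
    inner_flip_inl W k m f]
  have h1 : zeta (Sum.inr m) (flipAt (Sum.inl k) f) = zeta (Sum.inr m) f := by
    simp [zeta_flipAt]
  rw [h1]
  ring

lemma exp_diag {X : Type*} [Fintype X] [DecidableEq X] (d : X → ℂ) :
    NormedSpace.exp (Matrix.diagonal d) = Matrix.diagonal fun f => Complex.exp (d f) := by
  rw [Matrix.exp_diagonal, Pi.exp_def, ← Complex.exp_eq_exp_ℂ]

lemma cexp_real_mul_I (r : ℝ) :
    Complex.exp (Complex.I * r) = ↑(Real.cos r) + Complex.I * ↑(Real.sin r) := by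
  rw [mul_comm, Complex.exp_mul_I, ← Complex.ofReal_cos, ← Complex.ofReal_sin]
  ring

/-- Eq. (8) / Corollary B.5: closed form of the OTOC
`C(t) = ⟨P Q(t) P Q(t)⟩ = cos(4W^k_m t) - i ⟨σᶻ(v_k)σᶻ(h_m)⟩ sin(4W^k_m t)`. -/
theorem otoc_closed_form (k : Fin n) (m : Fin p)
    (a : Fin n → ℝ) (b : Fin p → ℝ) (W : Fin n → Fin p → ℝ)
    (P Q : Matrix ((Fin n ⊕ Fin p) → Fin 2) ((Fin n ⊕ Fin p) → Fin 2) ℂ)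
    (hP2 : P * P = 1) (hQ2 : Q * Q = 1) (hPQ : P * Q = Q * P)
    (hPanti : P * sigmaZ (Sum.inl k) = -(sigmaZ (Sum.inl k) * P))
    (hQanti : Q * sigmaZ (Sum.inr m) = -(sigmaZ (Sum.inr m) * Q))
    (hPcomm : ∀ s : Fin n ⊕ Fin p, s ≠ Sum.inl k → P * sigmaZ s = sigmaZ s * P)
    (hQcomm : ∀ s : Fin n ⊕ Fin p, s ≠ Sum.inr m → Q * sigmaZ s = sigmaZ s * Q) :
    ∀ t : ℝ,
      Matrix.trace (rhoTh a b W * P *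
          (NormedSpace.exp ((Complex.I * t) • Hrbm a b W) * Q *
            NormedSpace.exp ((-(Complex.I * t)) • Hrbm a b W)) * P *
          (NormedSpace.exp ((Complex.I * t) • Hrbm a b W) * Q *
            NormedSpace.exp ((-(Complex.I * t)) • Hrbm a b W))) =
        ((Real.cos (4 * W k m * t) : ℝ) : ℂ) -
          Complex.I *
            Matrix.trace (rhoTh a b W * sigmaZ (Sum.inl k) * sigmaZ (Sum.inr m)) *
            ((Real.sin (4 * W k m * t) : ℝ) : ℂ) := by
  intro t
  set e : ((Fin n ⊕ Fin p) → Fin 2) → ℝ := energy a b W with he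
  set w : ((Fin n ⊕ Fin p) → Fin 2) → ℂ := fun f => Complex.exp (-(e f : ℂ)) with hw
  set u : ((Fin n ⊕ Fin p) → Fin 2) → ℂ :=
    fun f => Complex.exp (Complex.I * t * (e f : ℂ)) with hu
  set v : ((Fin n ⊕ Fin p) → Fin 2) → ℂ :=
    fun f => Complex.exp (-(Complex.I * t) * (e f : ℂ)) with hv
  -- smul of diagonal
  have hsm : ∀ (r : ℂ) (d : ((Fin n ⊕ Fin p) → Fin 2) → ℂ),
      r • Matrix.diagonal d = Matrix.diagonal fun f => r * d f := by
    intro r d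
    rw [← Matrix.diagonal_smul]
    rfl
  -- exp computations
  have hexpneg : NormedSpace.exp (-Hrbm a b W) = Matrix.diagonal w := by
    have h1 : -Hrbm a b W
        = Matrix.diagonal fun f : (Fin n ⊕ Fin p) → Fin 2 => (-(e f : ℂ)) := by
      unfold Hrbm
      rw [← Matrix.diagonal_neg]
    rw [h1, exp_diag]
  have hexp1 : NormedSpace.exp ((Complex.I * t) • Hrbm a b W) = Matrix.diagonal u := by
    have h1 : (Complex.I * (t : ℂ)) • Hrbm a b W
        = Matrix.diagonal fun f : (Fin n ⊕ Fin p) → Fin 2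
            => Complex.I * t * (e f : ℂ) := by
      unfold Hrbm; rw [hsm]
    rw [h1, exp_diag]
  have hexp2 : NormedSpace.exp ((-(Complex.I * t)) • Hrbm a b W) = Matrix.diagonal v := by
    have h1 : (-(Complex.I * (t : ℂ))) • Hrbm a b W
        = Matrix.diagonal fun f : (Fin n ⊕ Fin p) → Fin 2
            => -(Complex.I * t) * (e f : ℂ) := by
      unfold Hrbm; rw [hsm]
    rw [h1, exp_diag]
  set c : ℂ := Matrix.trace (NormedSpace.exp (-Hrbm a b W)) with hc
  have hcw : c = ∑ f : (Fin n ⊕ Fin p) → Fin 2, w f := by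
    rw [hc, hexpneg, Matrix.trace_diagonal]
  have hρ : rhoTh a b W = c⁻¹ • Matrix.diagonal w := by
    unfold rhoTh; rw [← hc, hexpneg]
  -- c ≠ 0
  have hc0 : c ≠ 0 := by
    have hceq : c = ((∑ f : (Fin n ⊕ Fin p) → Fin 2, Real.exp (-(e f)) : ℝ) : ℂ) := by
      rw [hcw]
      push_cast
      exact Finset.sum_congr rfl fun f _ => rfl
    rw [hceq, Complex.ofReal_ne_zero]
    have hpos : 0 < ∑ f : (Fin n ⊕ Fin p) → Fin 2, Real.exp (-(e f)) :=
      Finset.sum_pos (fun f _ => Real.exp_pos _) Finset.univ_nonempty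
    exact ne_of_gt hpos
  -- move lemmas
  have moveP := move_diag hPanti hPcomm
  have moveQ := move_diag hQanti hQcomm
  have movePX : ∀ (d : ((Fin n ⊕ Fin p) → Fin 2) → ℂ) (M : Matrix ((Fin n ⊕ Fin p) → Fin 2) ((Fin n ⊕ Fin p) → Fin 2) ℂ),
      P * (Matrix.diagonal d * M)
        = Matrix.diagonal (fun f => d (flipAt (Sum.inl k) f)) * (P * M) := by
    intro d M; rw [← mul_assoc, moveP d, mul_assoc]
  have moveQX : ∀ (d : ((Fin n ⊕ Fin p) → Fin 2) → ℂ) (M : Matrix ((Fin n ⊕ Fin p) → Fin 2) ((Fin n ⊕ Fin p) → Fin 2) ℂ),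
      Q * (Matrix.diagonal d * M)
        = Matrix.diagonal (fun f => d (flipAt (Sum.inr m) f)) * (Q * M) := by
    intro d M; rw [← mul_assoc, moveQ d, mul_assoc]
  have diagX : ∀ (d d' : ((Fin n ⊕ Fin p) → Fin 2) → ℂ) (M : Matrix ((Fin n ⊕ Fin p) → Fin 2) ((Fin n ⊕ Fin p) → Fin 2) ℂ),
      Matrix.diagonal d * (Matrix.diagonal d' * M)
        = Matrix.diagonal (fun f => d f * d' f) * M := by
    intro d d' M
    rw [← mul_assoc, Matrix.diagonal_mul_diagonal]
  have hword : P * (Q * (P * Q)) = 1 := by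
    have h1 : Q * (P * Q) = P := by
      rw [← mul_assoc, ← hPQ, mul_assoc, hQ2, mul_one]
    rw [h1, hP2]
  -- RHS trace
  have hRHS : Matrix.trace (rhoTh a b W * sigmaZ (Sum.inl k) * sigmaZ (Sum.inr m))
      = c⁻¹ * ∑ f : (Fin n ⊕ Fin p) → Fin 2, w f * ((zeta (Sum.inl k) f : ℂ) * (zeta (Sum.inr m) f : ℂ)) := by
    rw [hρ]
    unfold sigmaZ
    simp only [smul_mul_assoc, Matrix.trace_smul, smul_eq_mul,
      Matrix.diagonal_mul_diagonal]
    congr 1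
    rw [Matrix.trace_diagonal]
    refine Finset.sum_congr rfl fun f _ => ?_
    simp [mul_assoc]
  rw [hRHS, hρ, hexp1, hexp2]
  simp only [smul_mul_assoc, Matrix.trace_smul, smul_eq_mul]
  simp only [mul_assoc, moveQ, moveP, moveQX, movePX, diagX]
  rw [hword, mul_one, Matrix.trace_diagonal]
  have hpt : ∀ f : (Fin n ⊕ Fin p) → Fin 2,
      w f *
        (u (flipAt (Sum.inl k) f) *
          (v (flipAt (Sum.inr m) (flipAt (Sum.inl k) f)) *
            (u (flipAt (Sum.inl k) (flipAt (Sum.inr m) (flipAt (Sum.inl k) f))) *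
              v (flipAt (Sum.inr m)
                  (flipAt (Sum.inl k) (flipAt (Sum.inr m) (flipAt (Sum.inl k) f)))))))
      = w f * (↑(Real.cos (4 * (W k m * t)))
          - Complex.I * ↑(Real.sin (4 * (W k m * t)))
            * ((zeta (Sum.inl k) f : ℂ) * (zeta (Sum.inr m) f : ℂ))) := by
    intro f
    have h3 : flipAt (Sum.inl k) (flipAt (Sum.inr m) (flipAt (Sum.inl k) f))
        = flipAt (Sum.inr m) f := by
      rw [flipAt_comm (Sum.inr m) (Sum.inl k) f, flipAt_flipAt]
    rw [h3, flipAt_flipAt]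
    rw [hw, hu, hv]
    simp only []
    rw [← Complex.exp_add, ← Complex.exp_add, ← Complex.exp_add, ← Complex.exp_add]
    have hkey := energy_key a b W k m f
    have h5 : -(e f : ℂ) +
        (Complex.I * t * (e (flipAt (Sum.inl k) f) : ℂ) +
          (-(Complex.I * t) * (e (flipAt (Sum.inr m) (flipAt (Sum.inl k) f)) : ℂ) +
            (Complex.I * t * (e (flipAt (Sum.inr m) f) : ℂ) +
              -(Complex.I * t) * (e f : ℂ))))
        = -(e f : ℂ) + Complex.I * t *
            ((-4 * W k m * (zeta (Sum.inl k) f * zeta (Sum.inr m) f) : ℝ) : ℂ) := by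
      rw [← hkey]
      push_cast
      ring
    rw [h5, Complex.exp_add]
    congr 1
    have hz : zeta (Sum.inl k) f * zeta (Sum.inr m) f = 1
        ∨ zeta (Sum.inl k) f * zeta (Sum.inr m) f = -1 := by
      rcases zeta_cases (Sum.inl k) f with h | h <;>
        rcases zeta_cases (Sum.inr m) f with h' | h' <;> rw [h, h'] <;> norm_num
    have hcast : ((zeta (Sum.inl k) f : ℂ) * (zeta (Sum.inr m) f : ℂ))
        = ((zeta (Sum.inl k) f * zeta (Sum.inr m) f : ℝ) : ℂ) := by push_cast; ring
    rw [hcast]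
    rcases hz with h | h <;> rw [h]
    · have harg : Complex.I * t * ((-4 * W k m * 1 : ℝ) : ℂ)
          = Complex.I * ((-(4 * (W k m * t)) : ℝ) : ℂ) := by push_cast; ring
      rw [harg, cexp_real_mul_I, Real.cos_neg, Real.sin_neg]
      push_cast
      ring
    · have harg : Complex.I * t * ((-4 * W k m * (-1) : ℝ) : ℂ)
          = Complex.I * (((4 * (W k m * t)) : ℝ) : ℂ) := by push_cast; ring
      rw [harg, cexp_real_mul_I]
      push_cast
      ring
  rw [Finset.sum_congr rfl (fun f _ => hpt f)]
  have hsplit : ∑ f : (Fin n ⊕ Fin p) → Fin 2,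
      w f * (↑(Real.cos (4 * (W k m * t)))
        - Complex.I * ↑(Real.sin (4 * (W k m * t)))
          * ((zeta (Sum.inl k) f : ℂ) * (zeta (Sum.inr m) f : ℂ)))
      = (∑ f : (Fin n ⊕ Fin p) → Fin 2, w f) * ↑(Real.cos (4 * (W k m * t)))
        - Complex.I * ↑(Real.sin (4 * (W k m * t)))
          * ∑ f : (Fin n ⊕ Fin p) → Fin 2,
              w f * ((zeta (Sum.inl k) f : ℂ) * (zeta (Sum.inr m) f : ℂ)) := by
    rw [Finset.sum_mul, Finset.mul_sum, ← Finset.sum_sub_distrib]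
    exact Finset.sum_congr rfl fun f _ => by ring
  rw [hsplit, ← hcw]
  field_simp

end
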